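/- Let R be a symmetric positive definite real m×m matrix and U ⊆ ℝ^m a nonempty closed convex set. For i = 1, 2, let v_i ∈ ℝ^m and let u_i ∈ U be the R-projection of R⁻¹v_i onto U, i.e. the unique point of U minimizing u ↦ ⟨R(u − R⁻¹v_i), u − R⁻¹v_i⟩ over U. Then ⟨u₁ − u₂, v₁ − v₂⟩ ≥ 0; that is, the feedback map v ↦ P_U^R[R⁻¹v] is monotone. -/

import Mathlib

open RealInnerProductSpace Matrix

section Aux

private lemma aux_small_t (a c : ℝ) (hc : 0 ≤ c)
    (h : ∀ t : ℝ, 0 < t → t ≤ 1 → 0 ≤ 2 * t * a + t ^ 2 * c) : 0 ≤ a := by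
  by_contra h'
  push_neg at h'
  rcases eq_or_lt_of_le hc with hc0 | hc0
  · have := h 1 one_pos le_rfl
    nlinarith
  · set t := min 1 (-a / c) with ht
    have htpos : 0 < t := lt_min one_pos (div_pos (neg_pos.mpr h') hc0)
    have h1 := h t htpos (min_le_left _ _)
    have h2 : t ≤ -a / c := min_le_right _ _
    have h3 : t * c ≤ -a := (le_div_iff₀ hc0).mp h2
    nlinarith [mul_le_mul_of_nonneg_left h3 htpos.le]

private lemma aux_inner_eq (m : ℕ) (w : Fin m → ℝ) (x : EuclideanSpace ℝ (Fin m)) :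
    ⟪(WithLp.equiv 2 (Fin m → ℝ)).symm w, x⟫ = w ⬝ᵥ x := by
  rw [PiLp.inner_apply]; simp [dotProduct, mul_comm]

private lemma aux_symm (m : ℕ) (R : Matrix (Fin m) (Fin m) ℝ) (hR : R.IsSymm)
    (x y : Fin m → ℝ) : R.mulVec x ⬝ᵥ y = R.mulVec y ⬝ᵥ x := by
  rw [dotProduct_comm, Matrix.dotProduct_mulVec, ← Matrix.mulVec_transpose, hR.eq]

private lemma aux_expand (m : ℕ) (R : Matrix (Fin m) (Fin m) ℝ) (hR : R.IsSymm)
    (p d : Fin m → ℝ) (t : ℝ) :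
    R.mulVec (p + t • d) ⬝ᵥ (p + t • d) =
      R.mulVec p ⬝ᵥ p + 2 * t * (R.mulVec p ⬝ᵥ d) + t ^ 2 * (R.mulVec d ⬝ᵥ d) := by
  have hsymm := aux_symm m R hR d p
  simp only [Matrix.mulVec_add, Matrix.mulVec_smul, add_dotProduct,
    smul_dotProduct, dotProduct_add, dotProduct_smul, smul_eq_mul]
  rw [hsymm]; ring

private lemma aux_nonneg (m : ℕ) (R : Matrix (Fin m) (Fin m) ℝ) (hR : R.PosDef)
    (x : Fin m → ℝ) : 0 ≤ R.mulVec x ⬝ᵥ x := by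
  rw [dotProduct_comm]
  simpa using hR.posSemidef.dotProduct_mulVec_nonneg x

/-- The variational inequality for the minimizer of the `R`-quadratic over a convex set. -/
private lemma aux_vi (m : ℕ) (R : Matrix (Fin m) (Fin m) ℝ)
    (hR_sym : R.IsSymm) (hR_pd : R.PosDef)
    (U : Set (EuclideanSpace ℝ (Fin m))) (hU_convex : Convex ℝ U)
    (z : EuclideanSpace ℝ (Fin m)) (u₀ : EuclideanSpace ℝ (Fin m)) (hu₀ : u₀ ∈ U)
    (hmin : ∀ u ∈ U, R.mulVec (u₀ - z) ⬝ᵥ (u₀ - z) ≤ R.mulVec (u - z) ⬝ᵥ (u - z))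
    (u : EuclideanSpace ℝ (Fin m)) (hu : u ∈ U) :
    0 ≤ R.mulVec (u₀ - z) ⬝ᵥ (u - u₀) := by
  apply aux_small_t _ _ (aux_nonneg m R hR_pd (u - u₀))
  intro t ht0 ht1
  have hw : u₀ + t • (u - u₀) ∈ U := by
    have h : u₀ + t • (u - u₀) = (1 - t) • u₀ + t • u := by module
    rw [h]
    exact hU_convex hu₀ hu (by linarith) ht0.le (by ring)
  have h2 := hmin _ hw
  have h3 : (u₀ + t • (u - u₀)).ofLp - z.ofLp =
      (u₀.ofLp - z.ofLp) + t • (u.ofLp - u₀.ofLp) := by simp; module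
  rw [h3] at h2
  have h4 := aux_expand m R hR_sym (u₀ - z) (u - u₀) t
  -- `h2 : ... ≤ R.mulVec ((u₀-z) + t•(u-u₀)) ⬝ᵥ ((u₀-z) + t•(u-u₀))`
  have h5 : R.mulVec ((u₀ - z : EuclideanSpace ℝ (Fin m)) + t • (u - u₀)) ⬝ᵥ
      ((u₀ - z : EuclideanSpace ℝ (Fin m)) + t • (u - u₀)) =
      R.mulVec (u₀ - z : EuclideanSpace ℝ (Fin m)) ⬝ᵥ (u₀ - z : EuclideanSpace ℝ (Fin m)) +
      2 * t * (R.mulVec (u₀ - z : EuclideanSpace ℝ (Fin m)) ⬝ᵥ (u - u₀ : EuclideanSpace ℝ (Fin m))) +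
      t ^ 2 * (R.mulVec (u - u₀ : EuclideanSpace ℝ (Fin m)) ⬝ᵥ (u - u₀ : EuclideanSpace ℝ (Fin m))) := h4
  rw [h4] at h2
  linarith

end Aux

/-- With `R` symmetric positive definite and `U ⊆ ℝ^m` nonempty closed convex: if `u₁`, `u₂`
are the `R`-projections of `R⁻¹v₁`, `R⁻¹v₂` onto `U` (the points of `U` minimizing
`u ↦ ⟨R(u − R⁻¹vᵢ), u − R⁻¹vᵢ⟩`), then `⟨u₁ − u₂, v₁ − v₂⟩ ≥ 0`: the feedback map
`v ↦ P_U^R[R⁻¹v]` is monotone. -/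
theorem stmt_10 (m : ℕ) (R : Matrix (Fin m) (Fin m) ℝ)
    (hR_sym : R.IsSymm) (hR_pd : R.PosDef)
    (U : Set (EuclideanSpace ℝ (Fin m)))
    (hU_ne : U.Nonempty) (hU_closed : IsClosed U) (hU_convex : Convex ℝ U)
    (v₁ v₂ u₁ u₂ : EuclideanSpace ℝ (Fin m)) (hu₁ : u₁ ∈ U) (hu₂ : u₂ ∈ U)
    (hu₁_min : ∀ u ∈ U,
      ⟪(WithLp.equiv 2 (Fin m → ℝ)).symm
          (R.mulVec (u₁ - (WithLp.equiv 2 (Fin m → ℝ)).symm (R⁻¹.mulVec v₁))),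
        u₁ - (WithLp.equiv 2 (Fin m → ℝ)).symm (R⁻¹.mulVec v₁)⟫ ≤
        ⟪(WithLp.equiv 2 (Fin m → ℝ)).symm
            (R.mulVec (u - (WithLp.equiv 2 (Fin m → ℝ)).symm (R⁻¹.mulVec v₁))),
          u - (WithLp.equiv 2 (Fin m → ℝ)).symm (R⁻¹.mulVec v₁)⟫)
    (hu₂_min : ∀ u ∈ U,
      ⟪(WithLp.equiv 2 (Fin m → ℝ)).symm
          (R.mulVec (u₂ - (WithLp.equiv 2 (Fin m → ℝ)).symm (R⁻¹.mulVec v₂))),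
        u₂ - (WithLp.equiv 2 (Fin m → ℝ)).symm (R⁻¹.mulVec v₂)⟫ ≤
        ⟪(WithLp.equiv 2 (Fin m → ℝ)).symm
            (R.mulVec (u - (WithLp.equiv 2 (Fin m → ℝ)).symm (R⁻¹.mulVec v₂))),
          u - (WithLp.equiv 2 (Fin m → ℝ)).symm (R⁻¹.mulVec v₂)⟫) :
    0 ≤ ⟪u₁ - u₂, v₁ - v₂⟫ := by
  classical
  set z₁ : EuclideanSpace ℝ (Fin m) := (WithLp.equiv 2 (Fin m → ℝ)).symm (R⁻¹.mulVec v₁) with hz₁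
  set z₂ : EuclideanSpace ℝ (Fin m) := (WithLp.equiv 2 (Fin m → ℝ)).symm (R⁻¹.mulVec v₂) with hz₂
  have hdet : IsUnit R.det := isUnit_iff_ne_zero.mpr hR_pd.det_pos.ne'
  have hRz₁ : R.mulVec z₁ = v₁ := by
    show R.mulVec (R⁻¹.mulVec v₁) = v₁
    rw [Matrix.mulVec_mulVec, Matrix.mul_nonsing_inv _ hdet, Matrix.one_mulVec]
  have hRz₂ : R.mulVec z₂ = v₂ := by
    show R.mulVec (R⁻¹.mulVec v₂) = v₂
    rw [Matrix.mulVec_mulVec, Matrix.mul_nonsing_inv _ hdet, Matrix.one_mulVec]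
  have hmin₁ : ∀ u ∈ U, R.mulVec (u₁ - z₁) ⬝ᵥ (u₁ - z₁) ≤ R.mulVec (u - z₁) ⬝ᵥ (u - z₁) := by
    intro u hu
    have := hu₁_min u hu
    rwa [aux_inner_eq, aux_inner_eq] at this
  have hmin₂ : ∀ u ∈ U, R.mulVec (u₂ - z₂) ⬝ᵥ (u₂ - z₂) ≤ R.mulVec (u - z₂) ⬝ᵥ (u - z₂) := by
    intro u hu
    have := hu₂_min u hu
    rwa [aux_inner_eq, aux_inner_eq] at this
  have h1 := aux_vi m R hR_sym hR_pd U hU_convex z₁ u₁ hu₁ hmin₁ u₂ hu₂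
  have h2 := aux_vi m R hR_sym hR_pd U hU_convex z₂ u₂ hu₂ hmin₂ u₁ hu₁
  -- expand
  have e1 : R.mulVec (u₁ - z₁ : EuclideanSpace ℝ (Fin m)) ⬝ᵥ (u₂ - u₁ : EuclideanSpace ℝ (Fin m)) =
      R.mulVec u₁ ⬝ᵥ (u₂ - u₁ : EuclideanSpace ℝ (Fin m)) -
      v₁ ⬝ᵥ (u₂ - u₁ : EuclideanSpace ℝ (Fin m)) := by
    rw [show (u₁ - z₁ : EuclideanSpace ℝ (Fin m)) = (u₁ : Fin m → ℝ) - z₁ from rfl,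
      Matrix.mulVec_sub, sub_dotProduct, hRz₁]
  have e2 : R.mulVec (u₂ - z₂ : EuclideanSpace ℝ (Fin m)) ⬝ᵥ (u₁ - u₂ : EuclideanSpace ℝ (Fin m)) =
      R.mulVec u₂ ⬝ᵥ (u₁ - u₂ : EuclideanSpace ℝ (Fin m)) -
      v₂ ⬝ᵥ (u₁ - u₂ : EuclideanSpace ℝ (Fin m)) := by
    rw [show (u₂ - z₂ : EuclideanSpace ℝ (Fin m)) = (u₂ : Fin m → ℝ) - z₂ from rfl,
      Matrix.mulVec_sub, sub_dotProduct, hRz₂]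
  replace h1 : 0 ≤ R.mulVec (u₁ - z₁ : EuclideanSpace ℝ (Fin m)) ⬝ᵥ (u₂ - u₁ : EuclideanSpace ℝ (Fin m)) := h1
  replace h2 : 0 ≤ R.mulVec (u₂ - z₂ : EuclideanSpace ℝ (Fin m)) ⬝ᵥ (u₁ - u₂ : EuclideanSpace ℝ (Fin m)) := h2
  rw [e1] at h1
  rw [e2] at h2
  have e3 : (u₁ - u₂ : EuclideanSpace ℝ (Fin m)) = -((u₂ - u₁ : EuclideanSpace ℝ (Fin m))) := by
    module
  have hpos : 0 ≤ R.mulVec ((u₁ : Fin m → ℝ) - u₂) ⬝ᵥ ((u₁ : Fin m → ℝ) - u₂) :=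
    aux_nonneg m R hR_pd _
  have hexp : R.mulVec ((u₁ : Fin m → ℝ) - u₂) ⬝ᵥ ((u₁ : Fin m → ℝ) - u₂) =
      R.mulVec u₁ ⬝ᵥ ((u₁ : Fin m → ℝ) - u₂) - R.mulVec u₂ ⬝ᵥ ((u₁ : Fin m → ℝ) - u₂) := by
    rw [Matrix.mulVec_sub, sub_dotProduct]
  have hgoal : ⟪u₁ - u₂, v₁ - v₂⟫ = ((u₁ : Fin m → ℝ) - (u₂ : Fin m → ℝ)) ⬝ᵥ ((v₁ : Fin m → ℝ) - (v₂ : Fin m → ℝ)) := by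
    rw [PiLp.inner_apply]; simp [dotProduct, mul_comm]
  rw [hgoal]
  have hsub : ∀ (a b c : Fin m → ℝ), a ⬝ᵥ (b - c) = a ⬝ᵥ b - a ⬝ᵥ c :=
    fun a b c => dotProduct_sub a b c
  have hsub' : ∀ (a b c : Fin m → ℝ), (a - b) ⬝ᵥ c = a ⬝ᵥ c - b ⬝ᵥ c :=
    fun a b c => sub_dotProduct a b c
  have hcomm : ∀ (a b : Fin m → ℝ), a ⬝ᵥ b = b ⬝ᵥ a := fun a b => dotProduct_comm a b
  -- express everything in terms of d := u₁ - u₂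
  have key1 : R.mulVec u₁ ⬝ᵥ ((u₂ : Fin m → ℝ) - u₁) =
      -(R.mulVec u₁ ⬝ᵥ ((u₁ : Fin m → ℝ) - u₂)) := by
    rw [hsub, hsub]; ring
  have key2 : v₁ ⬝ᵥ ((u₂ : Fin m → ℝ) - u₁) = -(v₁ ⬝ᵥ ((u₁ : Fin m → ℝ) - u₂)) := by
    rw [hsub, hsub]; ring
  have hv : ((u₁ : Fin m → ℝ) - (u₂ : Fin m → ℝ)) ⬝ᵥ ((v₁ : Fin m → ℝ) - (v₂ : Fin m → ℝ)) =
      v₁ ⬝ᵥ ((u₁ : Fin m → ℝ) - u₂) - v₂ ⬝ᵥ ((u₁ : Fin m → ℝ) - u₂) := by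
    exact (hcomm _ _).trans (hsub' _ _ _)
  have h1' : 0 ≤ -(R.mulVec u₁ ⬝ᵥ ((u₁ : Fin m → ℝ) - u₂)) + v₁ ⬝ᵥ ((u₁ : Fin m → ℝ) - u₂) := by
    have : R.mulVec u₁ ⬝ᵥ ((u₂ - u₁ : EuclideanSpace ℝ (Fin m)) : Fin m → ℝ) =
        R.mulVec u₁ ⬝ᵥ ((u₂ : Fin m → ℝ) - u₁) := rfl
    rw [this, key1] at h1
    have : v₁ ⬝ᵥ ((u₂ - u₁ : EuclideanSpace ℝ (Fin m)) : Fin m → ℝ) =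
        v₁ ⬝ᵥ ((u₂ : Fin m → ℝ) - u₁) := rfl
    rw [this, key2] at h1
    linarith
  have h2' : 0 ≤ R.mulVec u₂ ⬝ᵥ ((u₁ : Fin m → ℝ) - u₂) - v₂ ⬝ᵥ ((u₁ : Fin m → ℝ) - u₂) := h2
  rw [hv]
  linarith [hpos, hexp.ge, hexp.le]
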